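/- The relative entropy of contextuality is subadditive under independent juxtapositions: for behaviors B1 in a scenario S1 and B2 in a scenario S2, with NC(S1), NC(S2) and NC(S1 ⊗ S2) nonempty, one has KL(B1 ⊗ B2) ≤ KL(B1) + KL(B2), where KL(B1 ⊗ B2) is computed in the juxtaposed scenario S1 ⊗ S2. -/

import Mathlib

open scoped BigOperators

/-- A probability distribution on a finite type. -/
def IsDist {X : Type} [Fintype X] (f : X → ℝ) : Prop :=
  (∀ x, 0 ≤ f x) ∧ ∑ x, f x = 1

lemma isDist_prodFun {A B : Type} [Fintype A] [Fintype B] {f : A → ℝ} {g : B → ℝ}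
    (hf : IsDist f) (hg : IsDist g) :
    IsDist (fun x : A × B => f x.1 * g x.2) := by
  refine ⟨fun x => mul_nonneg (hf.1 x.1) (hg.1 x.2), ?_⟩
  calc ∑ x : A × B, f x.1 * g x.2 = ∑ a, ∑ b, f a * g b := by
        rw [Fintype.sum_prod_type]
    _ = (∑ a, f a) * (∑ b, g b) := by rw [Finset.sum_mul_sum]
    _ = 1 := by rw [hf.2, hg.2, mul_one]

lemma isDist_prodFun' {K1 J1 K2 J2 : Type} [Fintype K1] [Fintype J1] [Fintype K2] [Fintype J2]
    {f : K1 × J1 → ℝ} {g : K2 × J2 → ℝ} (hf : IsDist f) (hg : IsDist g) :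
    IsDist (fun kj : (K1 × K2) × (J1 × J2) => f (kj.1.1, kj.2.1) * g (kj.1.2, kj.2.2)) := by
  refine ⟨fun kj => mul_nonneg (hf.1 _) (hg.1 _), ?_⟩
  have h := (isDist_prodFun hf hg).2
  rw [← h]
  exact Fintype.sum_equiv (Equiv.prodProdProdComm K1 K2 J1 J2) _ _ (by rintro ⟨⟨a, b⟩, c, d⟩; rfl)

/-- A prepare-and-measure scenario: finite nonempty sets of preparations `I`,
measurements `J` and outcomes `K` (carried as type-class assumptions on the index
types), together with a family of preparation operational equivalences (pairs of
probability distributions on `I`) and a family of measurement operational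
equivalences (pairs of probability distributions on `K × J`). -/
structure Scenario (I J K : Type) [Fintype I] [Fintype J] [Fintype K] where
  PE : Type
  ME : Type
  prepEq : PE → (I → ℝ) × (I → ℝ)
  measEq : ME → (K × J → ℝ) × (K × J → ℝ)
  prep_dist : ∀ s, IsDist (prepEq s).1 ∧ IsDist (prepEq s).2
  meas_dist : ∀ r, IsDist (measEq r).1 ∧ IsDist (measEq r).2

/-- A behavior: a family `p k ∣ j, i` of nonnegative reals, normalized over outcomes. -/
def IsBehavior {I J K : Type} [Fintype I] [Fintype J] [Fintype K]
    (p : I → J → K → ℝ) : Prop :=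
  (∀ i j k, 0 ≤ p i j k) ∧ ∀ i j, ∑ k, p i j k = 1

/-- A behavior is noncontextual in a scenario `S` if it admits a universally
noncontextual ontological model over a finite ontic space. -/
def Noncontextual {I J K : Type} [Fintype I] [Fintype J] [Fintype K]
    (S : Scenario I J K) (p : I → J → K → ℝ) : Prop :=
  ∃ (n : ℕ) (μ : I → Fin n → ℝ) (ξ : Fin n → J → K → ℝ),
    (∀ i, IsDist (μ i)) ∧
    (∀ l j, IsDist (ξ l j)) ∧
    (∀ i j k, p i j k = ∑ l, ξ l j k * μ i l) ∧
    (∀ s l, ∑ i, ((S.prepEq s).1 i - (S.prepEq s).2 i) * μ i l = 0) ∧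
    (∀ r l, ∑ kj : K × J, ((S.measEq r).1 kj - (S.measEq r).2 kj) * ξ l kj.2 kj.1 = 0)

/-- The juxtaposition of two behaviors. -/
def prodBehavior {I1 J1 K1 I2 J2 K2 : Type}
    [Fintype I1] [Fintype J1] [Fintype K1] [Fintype I2] [Fintype J2] [Fintype K2]
    (p1 : I1 → J1 → K1 → ℝ) (p2 : I2 → J2 → K2 → ℝ) :
    I1 × I2 → J1 × J2 → K1 × K2 → ℝ :=
  fun i j k => p1 i.1 j.1 k.1 * p2 i.2 j.2 k.2

/-- The juxtaposition `S1 ⊗ S2` of two scenarios: preparation (resp. measurement)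
equivalences are all pairs `(α ⊗ γ, β ⊗ γ)` with `(α, β)` an equivalence of `S1` and
`γ` an arbitrary distribution on the preparations (resp. measurement events) of `S2`,
together with the symmetric ones coming from `S2`. -/
def Scenario.prod {I1 J1 K1 I2 J2 K2 : Type}
    [Fintype I1] [Fintype J1] [Fintype K1] [Fintype I2] [Fintype J2] [Fintype K2]
    (S1 : Scenario I1 J1 K1) (S2 : Scenario I2 J2 K2) :
    Scenario (I1 × I2) (J1 × J2) (K1 × K2) where
  PE := (S1.PE × {γ : I2 → ℝ // IsDist γ}) ⊕ (S2.PE × {γ : I1 → ℝ // IsDist γ})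
  ME := (S1.ME × {γ : K2 × J2 → ℝ // IsDist γ}) ⊕ (S2.ME × {γ : K1 × J1 → ℝ // IsDist γ})
  prepEq := fun e =>
    match e with
    | Sum.inl (s, γ) =>
        (fun i => (S1.prepEq s).1 i.1 * γ.1 i.2, fun i => (S1.prepEq s).2 i.1 * γ.1 i.2)
    | Sum.inr (s, γ) =>
        (fun i => γ.1 i.1 * (S2.prepEq s).1 i.2, fun i => γ.1 i.1 * (S2.prepEq s).2 i.2)
  measEq := fun e =>
    match e with
    | Sum.inl (r, γ) =>
        (fun kj => (S1.measEq r).1 (kj.1.1, kj.2.1) * γ.1 (kj.1.2, kj.2.2),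
         fun kj => (S1.measEq r).2 (kj.1.1, kj.2.1) * γ.1 (kj.1.2, kj.2.2))
    | Sum.inr (r, γ) =>
        (fun kj => γ.1 (kj.1.1, kj.2.1) * (S2.measEq r).1 (kj.1.2, kj.2.2),
         fun kj => γ.1 (kj.1.1, kj.2.1) * (S2.measEq r).2 (kj.1.2, kj.2.2))
  prep_dist := by
    rintro (⟨s, γ⟩ | ⟨s, γ⟩)
    · exact ⟨isDist_prodFun (S1.prep_dist s).1 γ.2, isDist_prodFun (S1.prep_dist s).2 γ.2⟩
    · exact ⟨isDist_prodFun γ.2 (S2.prep_dist s).1, isDist_prodFun γ.2 (S2.prep_dist s).2⟩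
  meas_dist := by
    rintro (⟨r, γ⟩ | ⟨r, γ⟩)
    · exact ⟨isDist_prodFun' (S1.meas_dist r).1 γ.2, isDist_prodFun' (S1.meas_dist r).2 γ.2⟩
    · exact ⟨isDist_prodFun' γ.2 (S2.meas_dist r).1, isDist_prodFun' γ.2 (S2.meas_dist r).2⟩

/-- A free operation: a pre-processing of preparations, a pre-processing of
measurement choices and, for each simulated measurement, a post-processing of the
outcomes, all given by stochastic maps. -/
structure FreeOp (I J K I' J' K' : Type)
    [Fintype I] [Fintype J] [Fintype K] [Fintype I'] [Fintype J'] [Fintype K'] where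
  qP : I' → I → ℝ
  qM : J' → J → ℝ
  qO : J' → K → K' → ℝ
  qP_dist : ∀ i', IsDist (qP i')
  qM_dist : ∀ j', IsDist (qM j')
  qO_dist : ∀ j' k, IsDist (qO j' k)

/-- Action of a free operation on a behavior. -/
def FreeOp.apply {I J K I' J' K' : Type}
    [Fintype I] [Fintype J] [Fintype K] [Fintype I'] [Fintype J'] [Fintype K']
    (T : FreeOp I J K I' J' K') (p : I → J → K → ℝ) : I' → J' → K' → ℝ :=
  fun i' j' k' => ∑ i, ∑ j, ∑ k, T.qO j' k k' * p i j k * T.qM j' j * T.qP i' i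

/-- `T` lifts the operational equivalences of `S'` to those of `S`. -/
def LiftsEquivalences {I J K I' J' K' : Type}
    [Fintype I] [Fintype J] [Fintype K] [Fintype I'] [Fintype J'] [Fintype K']
    (S : Scenario I J K) (S' : Scenario I' J' K') (T : FreeOp I J K I' J' K') : Prop :=
  (∀ s' : S'.PE, ∃ s : S.PE, ∀ i : I,
      ∑ i' : I', ((S'.prepEq s').1 i' - (S'.prepEq s').2 i') * T.qP i' i
        = (S.prepEq s).1 i - (S.prepEq s).2 i) ∧
  (∀ r' : S'.ME, ∃ r : S.ME, ∀ k : K, ∀ j : J,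
      ∑ kj' : K' × J', ((S'.measEq r').1 kj' - (S'.measEq r').2 kj') *
          (T.qO kj'.2 k kj'.1 * T.qM kj'.2 j)
        = (S.measEq r).1 (k, j) - (S.measEq r).2 (k, j))

/-- The contextual fraction. -/
noncomputable def ctxFraction {I J K : Type} [Fintype I] [Fintype J] [Fintype K]
    (S : Scenario I J K) (p : I → J → K → ℝ) : ℝ :=
  1 - sSup {l : ℝ | 0 ≤ l ∧ l ≤ 1 ∧ ∃ q q' : I → J → K → ℝ,
      Noncontextual S q ∧ IsBehavior q' ∧
      ∀ i j k, p i j k = l * q i j k + (1 - l) * q' i j k}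

/-- The robustness of contextuality. -/
noncomputable def robustness {I J K : Type} [Fintype I] [Fintype J] [Fintype K]
    (S : Scenario I J K) (p : I → J → K → ℝ) : ℝ :=
  sInf {l : ℝ | 0 ≤ l ∧ l ≤ 1 ∧ ∃ q : I → J → K → ℝ, Noncontextual S q ∧
      Noncontextual S (fun i j k => l * q i j k + (1 - l) * p i j k)}

/-- The robustness with respect to a fixed reference behavior. -/
noncomputable def refRobustness {I J K : Type} [Fintype I] [Fintype J] [Fintype K]
    (S : Scenario I J K) (pref p : I → J → K → ℝ) : ℝ :=
  sInf {l : ℝ | 0 ≤ l ∧ l ≤ 1 ∧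
      Noncontextual S (fun i j k => l * pref i j k + (1 - l) * p i j k)}

/-- One term of the Kullback-Leibler divergence, with the conventions
`0 log (0/q) = 0` and `p log (p/0) = ∞` for `p > 0`. -/
noncomputable def klTerm (p q : ℝ) : EReal :=
  if p = 0 then 0 else if q = 0 then ⊤ else ((p * Real.log (p / q) : ℝ) : EReal)

/-- KL divergence between behaviors: maximum over preparations and measurements. -/
noncomputable def DKL {I J K : Type} [Fintype I] [Fintype J] [Fintype K]
    (p q : I → J → K → ℝ) : EReal :=
  ⨆ i : I, ⨆ j : J, ∑ k : K, klTerm (p i j k) (q i j k)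

/-- The relative entropy of contextuality. -/
noncomputable def relEntCtx {I J K : Type} [Fintype I] [Fintype J] [Fintype K]
    (S : Scenario I J K) (p : I → J → K → ℝ) : EReal :=
  ⨅ q ∈ {q : I → J → K → ℝ | Noncontextual S q}, DKL p q

/-- ℓ1 distance between behaviors: maximum over preparations and measurements. -/
noncomputable def D1 {I J K : Type} [Fintype I] [Fintype J] [Fintype K]
    (p q : I → J → K → ℝ) : ℝ :=
  ⨆ ij : I × J, ∑ k : K, |p ij.1 ij.2 k - q ij.1 ij.2 k|

/-- The ℓ1-contextuality distance. -/
noncomputable def l1CtxDistance {I J K : Type} [Fintype I] [Fintype J] [Fintype K]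
    (S : Scenario I J K) (p : I → J → K → ℝ) : ℝ :=
  sInf {d : ℝ | ∃ q : I → J → K → ℝ, Noncontextual S q ∧ D1 p q = d}

/-- The uniform ℓ1-contextuality distance. -/
noncomputable def uniformL1CtxDistance {I J K : Type} [Fintype I] [Fintype J] [Fintype K]
    (S : Scenario I J K) (p : I → J → K → ℝ) : ℝ :=
  (1 / (2 * (Fintype.card I : ℝ) * (Fintype.card J : ℝ))) *
    sInf {d : ℝ | ∃ q : I → J → K → ℝ, Noncontextual S q ∧
      ∑ i, ∑ j, ∑ k, |p i j k - q i j k| = d}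

/-- The measurement-assignment polytope of a scenario. -/
def MAPolytope {I J K : Type} [Fintype I] [Fintype J] [Fintype K]
    (S : Scenario I J K) : Set (K × J → ℝ) :=
  {ξ | (∀ kj, 0 ≤ ξ kj) ∧ (∀ j, ∑ k, ξ (k, j) = 1) ∧
    ∀ r, ∑ kj : K × J, ((S.measEq r).1 kj - (S.measEq r).2 kj) * ξ kj = 0}

noncomputable def rkl (p q : ℝ) : ℝ := if p = 0 then 0 else p * Real.log (p / q)

lemma ERC.coe_sum {α : Type*} (s : Finset α) (f : α → ℝ) :
    ((∑ x ∈ s, f x : ℝ) : EReal) = ∑ x ∈ s, ((f x : ℝ) : EReal) :=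
  map_sum (⟨⟨Real.toEReal, EReal.coe_zero⟩, EReal.coe_add⟩ : ℝ →+ EReal) f s

lemma klTerm_ne_bot (p q : ℝ) : klTerm p q ≠ ⊥ := by
  unfold klTerm; split_ifs
  · simp
  · simp
  · exact EReal.coe_ne_bot _

lemma klTerm_eq_coe {p q : ℝ} (h : p ≠ 0 → q ≠ 0) : klTerm p q = ((rkl p q : ℝ) : EReal) := by
  unfold klTerm rkl
  by_cases hp : p = 0
  · simp [hp]
  · simp [hp, h hp]

lemma klTerm_eq_top {p q : ℝ} (hp : p ≠ 0) (hq : q = 0) : klTerm p q = ⊤ := by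
  rw [klTerm, if_neg hp, if_pos hq]

lemma klTerm_ge {p q : ℝ} (hp0 : 0 ≤ p) (hq0 : 0 ≤ q) (hq1 : q ≤ 1) :
    ((-1 : ℝ) : EReal) ≤ klTerm p q := by
  unfold klTerm
  by_cases hp : p = 0
  · rw [if_pos hp]
    exact_mod_cast (by norm_num : (-1:ℝ) ≤ 0)
  rw [if_neg hp]
  by_cases hq : q = 0
  · rw [if_pos hq]; exact le_top
  rw [if_neg hq, EReal.coe_le_coe_iff]
  have hppos : 0 < p := lt_of_le_of_ne hp0 (Ne.symm hp)
  have h1 : Real.log (p / q) = Real.log p - Real.log q := Real.log_div hp hq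
  have hlq : Real.log q ≤ 0 := Real.log_nonpos hq0 hq1
  have h2 : 1 - p⁻¹ ≤ Real.log p := Real.one_sub_inv_le_log_of_pos hppos
  have h3 : p * (1 - p⁻¹) ≤ p * Real.log p := mul_le_mul_of_nonneg_left h2 hp0
  have h4 : p * (1 - p⁻¹) = p - 1 := by field_simp
  nlinarith [mul_nonneg hp0 (neg_nonneg.mpr hlq)]

lemma sum_klTerm_ne_bot {K : Type} [Fintype K] (p q : K → ℝ) (s : Finset K) :
    ∑ k ∈ s, klTerm (p k) (q k) ≠ ⊥ := by
  classical
  induction s using Finset.induction_on with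
  | empty => simp
  | insert _ _ h ih =>
      rw [Finset.sum_insert h]
      intro hc
      rcases EReal.add_eq_bot_iff.mp hc with h' | h'
      · exact klTerm_ne_bot _ _ h'
      · exact ih h'

lemma sum_klTerm_eq_top {K : Type} [Fintype K] (p q : K → ℝ) (k0 : K)
    (h : klTerm (p k0) (q k0) = ⊤) : ∑ k, klTerm (p k) (q k) = ⊤ := by
  classical
  rw [← Finset.add_sum_erase _ _ (Finset.mem_univ k0), h]
  exact EReal.top_add_of_ne_bot (sum_klTerm_ne_bot p q _)

lemma sum_klTerm_eq_coe {K : Type} [Fintype K] {p q : K → ℝ}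
    (h : ∀ k, p k ≠ 0 → q k ≠ 0) :
    ∑ k, klTerm (p k) (q k) = ((∑ k, rkl (p k) (q k) : ℝ) : EReal) := by
  rw [ERC.coe_sum]
  exact Finset.sum_congr rfl fun k _ => klTerm_eq_coe (h k)

lemma rkl_mul {p1 q1 p2 q2 : ℝ} (h1 : p1 ≠ 0 → q1 ≠ 0) (h2 : p2 ≠ 0 → q2 ≠ 0) :
    rkl (p1 * p2) (q1 * q2) = rkl p1 q1 * p2 + p1 * rkl p2 q2 := by
  unfold rkl
  by_cases hp1 : p1 = 0
  · simp [hp1]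
  by_cases hp2 : p2 = 0
  · simp [hp2]
  have hq1 := h1 hp1; have hq2 := h2 hp2
  rw [if_neg (mul_ne_zero hp1 hp2), if_neg hp1, if_neg hp2, mul_div_mul_comm,
    Real.log_mul (div_ne_zero hp1 hq1) (div_ne_zero hp2 hq2)]
  ring

lemma sum_prod_factor {A B : Type} [Fintype A] [Fintype B] (f : A → ℝ) (g : B → ℝ) :
    ∑ x : A × B, f x.1 * g x.2 = (∑ a, f a) * (∑ b, g b) := by
  rw [Finset.sum_mul_sum, Fintype.sum_prod_type]

lemma behavior_of_noncontextual {I J K : Type} [Fintype I] [Fintype J] [Fintype K]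
    {S : Scenario I J K} {q : I → J → K → ℝ} (h : Noncontextual S q) : IsBehavior q := by
  obtain ⟨n, μ, ξ, hμ, hξ, heq, -, -⟩ := h
  constructor
  · intro i j k
    rw [heq]
    exact Finset.sum_nonneg fun l _ => mul_nonneg ((hξ l j).1 k) ((hμ i).1 l)
  · intro i j
    calc ∑ k, q i j k = ∑ k, ∑ l, ξ l j k * μ i l :=
          Finset.sum_congr rfl fun k _ => heq i j k
      _ = ∑ l, ∑ k, ξ l j k * μ i l := Finset.sum_comm
      _ = ∑ l, (∑ k, ξ l j k) * μ i l :=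
          Finset.sum_congr rfl fun l _ => (Finset.sum_mul _ _ _).symm
      _ = ∑ l, μ i l := Finset.sum_congr rfl fun l _ => by rw [(hξ l j).2, one_mul]
      _ = 1 := (hμ i).2

lemma behavior_le_one {I J K : Type} [Fintype I] [Fintype J] [Fintype K]
    {p : I → J → K → ℝ} (hp : IsBehavior p) (i : I) (j : J) (k : K) : p i j k ≤ 1 := by
  have := Finset.single_le_sum (f := p i j) (fun k _ => hp.1 i j k) (Finset.mem_univ k)
  rwa [hp.2 i j] at this

lemma relEntCtx_ne_bot {I J K : Type} [Fintype I] [Fintype J] [Fintype K]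
    [Nonempty I] [Nonempty J]
    (S : Scenario I J K) {p : I → J → K → ℝ} (hp : IsBehavior p) :
    relEntCtx S p ≠ ⊥ := by
  have hlb : ((-(Fintype.card K : ℝ) : ℝ) : EReal) ≤ relEntCtx S p := by
    apply le_iInf₂
    intro q hq
    have hqb : IsBehavior q := behavior_of_noncontextual hq
    refine le_iSup₂_of_le (Classical.arbitrary I) (Classical.arbitrary J) ?_
    have h1 : ∑ _k : K, (-1 : ℝ) = -(Fintype.card K : ℝ) := by simp
    rw [← h1, ERC.coe_sum]
    exact Finset.sum_le_sum fun k _ =>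
      klTerm_ge (hp.1 _ _ k) (hqb.1 _ _ k) (behavior_le_one hqb _ _ k)
  intro hbot
  rw [hbot] at hlb
  exact EReal.coe_ne_bot _ (le_bot_iff.mp hlb)

lemma DKL_extract {I J K : Type} [Fintype I] [Fintype J] [Fintype K]
    {p q : I → J → K → ℝ} {r : ℝ} (h : DKL p q ≤ (r : EReal)) (i : I) (j : J) :
    (∀ k, p i j k ≠ 0 → q i j k ≠ 0) ∧ ∑ k, rkl (p i j k) (q i j k) ≤ r := by
  have hs : ∑ k, klTerm (p i j k) (q i j k) ≤ (r : EReal) :=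
    le_trans (le_iSup₂ (f := fun i j => ∑ k, klTerm (p i j k) (q i j k)) i j) h
  have hz : ∀ k, p i j k ≠ 0 → q i j k ≠ 0 := by
    intro k hpk hqk
    rw [sum_klTerm_eq_top (fun k => p i j k) (fun k => q i j k) k
      (klTerm_eq_top hpk hqk)] at hs
    exact EReal.coe_ne_top r (top_le_iff.mp hs)
  refine ⟨hz, ?_⟩
  rw [sum_klTerm_eq_coe hz, EReal.coe_le_coe_iff] at hs
  exact hs

lemma DKL_prod_le {I1 J1 K1 I2 J2 K2 : Type}
    [Fintype I1] [Fintype J1] [Fintype K1] [Fintype I2] [Fintype J2] [Fintype K2]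
    {p1 q1 : I1 → J1 → K1 → ℝ} {p2 q2 : I2 → J2 → K2 → ℝ}
    (hp1 : IsBehavior p1) (hp2 : IsBehavior p2) {r1 r2 : ℝ}
    (h1 : DKL p1 q1 ≤ (r1 : EReal)) (h2 : DKL p2 q2 ≤ (r2 : EReal)) :
    DKL (prodBehavior p1 p2) (prodBehavior q1 q2) ≤ ((r1 + r2 : ℝ) : EReal) := by
  unfold DKL
  apply iSup₂_le
  intro i j
  obtain ⟨hz1, hr1⟩ := DKL_extract h1 i.1 j.1
  obtain ⟨hz2, hr2⟩ := DKL_extract h2 i.2 j.2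
  have hz : ∀ k : K1 × K2,
      prodBehavior p1 p2 i j k ≠ 0 → prodBehavior q1 q2 i j k ≠ 0 := by
    intro k hk
    have hk1 : p1 i.1 j.1 k.1 ≠ 0 := fun h => hk (by simp [prodBehavior, h])
    have hk2 : p2 i.2 j.2 k.2 ≠ 0 := fun h => hk (by simp [prodBehavior, h])
    exact mul_ne_zero (hz1 k.1 hk1) (hz2 k.2 hk2)
  rw [sum_klTerm_eq_coe hz, EReal.coe_le_coe_iff]
  have hkey : ∀ k : K1 × K2, rkl (prodBehavior p1 p2 i j k) (prodBehavior q1 q2 i j k)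
      = rkl (p1 i.1 j.1 k.1) (q1 i.1 j.1 k.1) * p2 i.2 j.2 k.2
        + p1 i.1 j.1 k.1 * rkl (p2 i.2 j.2 k.2) (q2 i.2 j.2 k.2) :=
    fun k => rkl_mul (hz1 k.1) (hz2 k.2)
  calc ∑ k : K1 × K2, rkl (prodBehavior p1 p2 i j k) (prodBehavior q1 q2 i j k)
      = ∑ k : K1 × K2, (rkl (p1 i.1 j.1 k.1) (q1 i.1 j.1 k.1) * p2 i.2 j.2 k.2
          + p1 i.1 j.1 k.1 * rkl (p2 i.2 j.2 k.2) (q2 i.2 j.2 k.2)) :=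
        Finset.sum_congr rfl fun k _ => hkey k
    _ = (∑ k1, rkl (p1 i.1 j.1 k1) (q1 i.1 j.1 k1)) * (∑ k2, p2 i.2 j.2 k2)
        + (∑ k1, p1 i.1 j.1 k1) * (∑ k2, rkl (p2 i.2 j.2 k2) (q2 i.2 j.2 k2)) := by
        rw [Finset.sum_add_distrib]
        rw [show (∑ k : K1 × K2, rkl (p1 i.1 j.1 k.1) (q1 i.1 j.1 k.1) * p2 i.2 j.2 k.2)
            = (∑ k1, rkl (p1 i.1 j.1 k1) (q1 i.1 j.1 k1)) * (∑ k2, p2 i.2 j.2 k2) from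
          sum_prod_factor (fun k1 => rkl (p1 i.1 j.1 k1) (q1 i.1 j.1 k1))
            (fun k2 => p2 i.2 j.2 k2)]
        rw [show (∑ k : K1 × K2, p1 i.1 j.1 k.1 * rkl (p2 i.2 j.2 k.2) (q2 i.2 j.2 k.2))
            = (∑ k1, p1 i.1 j.1 k1) * (∑ k2, rkl (p2 i.2 j.2 k2) (q2 i.2 j.2 k2)) from
          sum_prod_factor (fun k1 => p1 i.1 j.1 k1)
            (fun k2 => rkl (p2 i.2 j.2 k2) (q2 i.2 j.2 k2))]
    _ = (∑ k1, rkl (p1 i.1 j.1 k1) (q1 i.1 j.1 k1))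
        + (∑ k2, rkl (p2 i.2 j.2 k2) (q2 i.2 j.2 k2)) := by
        rw [hp1.2, hp2.2, one_mul, mul_one]
    _ ≤ r1 + r2 := add_le_add hr1 hr2

lemma noncontextual_prod {I1 J1 K1 I2 J2 K2 : Type}
    [Fintype I1] [Fintype J1] [Fintype K1] [Fintype I2] [Fintype J2] [Fintype K2]
    {S1 : Scenario I1 J1 K1} {S2 : Scenario I2 J2 K2}
    {q1 : I1 → J1 → K1 → ℝ} {q2 : I2 → J2 → K2 → ℝ}
    (h1 : Noncontextual S1 q1) (h2 : Noncontextual S2 q2) :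
    Noncontextual (S1.prod S2) (prodBehavior q1 q2) := by
  obtain ⟨n1, μ1, ξ1, hμ1, hξ1, heq1, hpe1, hme1⟩ := h1
  obtain ⟨n2, μ2, ξ2, hμ2, hξ2, heq2, hpe2, hme2⟩ := h2
  refine ⟨n1 * n2,
    fun i l => μ1 i.1 (finProdFinEquiv.symm l).1 * μ2 i.2 (finProdFinEquiv.symm l).2,
    fun l j k => ξ1 (finProdFinEquiv.symm l).1 j.1 k.1 * ξ2 (finProdFinEquiv.symm l).2 j.2 k.2,
    ?_, ?_, ?_, ?_, ?_⟩
  · intro i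
    refine ⟨fun l => mul_nonneg ((hμ1 i.1).1 _) ((hμ2 i.2).1 _), ?_⟩
    rw [← (isDist_prodFun (hμ1 i.1) (hμ2 i.2)).2]
    exact Fintype.sum_equiv finProdFinEquiv.symm _ _ (fun l => rfl)
  · intro l j
    exact isDist_prodFun (hξ1 _ j.1) (hξ2 _ j.2)
  · intro i j k
    show q1 i.1 j.1 k.1 * q2 i.2 j.2 k.2 = _
    rw [heq1, heq2]
    calc (∑ l1, ξ1 l1 j.1 k.1 * μ1 i.1 l1) * (∑ l2, ξ2 l2 j.2 k.2 * μ2 i.2 l2)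
        = ∑ x : Fin n1 × Fin n2, (ξ1 x.1 j.1 k.1 * μ1 i.1 x.1) * (ξ2 x.2 j.2 k.2 * μ2 i.2 x.2) :=
          (sum_prod_factor (fun l1 => ξ1 l1 j.1 k.1 * μ1 i.1 l1)
            (fun l2 => ξ2 l2 j.2 k.2 * μ2 i.2 l2)).symm
      _ = _ := (Fintype.sum_equiv finProdFinEquiv.symm _ _ (fun l => by ring)).symm
  · rintro (⟨s, γ⟩ | ⟨s, γ⟩) l
    · calc ∑ i : I1 × I2, (((S1.prod S2).prepEq (Sum.inl (s, γ))).1 i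
            - ((S1.prod S2).prepEq (Sum.inl (s, γ))).2 i)
            * (μ1 i.1 (finProdFinEquiv.symm l).1 * μ2 i.2 (finProdFinEquiv.symm l).2)
          = ∑ i : I1 × I2,
            (((S1.prepEq s).1 i.1 - (S1.prepEq s).2 i.1) * μ1 i.1 (finProdFinEquiv.symm l).1)
            * (γ.1 i.2 * μ2 i.2 (finProdFinEquiv.symm l).2) :=
            Finset.sum_congr rfl fun i _ => by show ((_*_) - (_*_)) * _ = _ ; ring
        _ = (∑ i1, ((S1.prepEq s).1 i1 - (S1.prepEq s).2 i1) * μ1 i1 (finProdFinEquiv.symm l).1)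
            * (∑ i2, γ.1 i2 * μ2 i2 (finProdFinEquiv.symm l).2) :=
            sum_prod_factor
              (fun i1 => ((S1.prepEq s).1 i1 - (S1.prepEq s).2 i1) * μ1 i1 (finProdFinEquiv.symm l).1)
              (fun i2 => γ.1 i2 * μ2 i2 (finProdFinEquiv.symm l).2)
        _ = 0 := by rw [hpe1 s _, zero_mul]
    · calc ∑ i : I1 × I2, (((S1.prod S2).prepEq (Sum.inr (s, γ))).1 i
            - ((S1.prod S2).prepEq (Sum.inr (s, γ))).2 i)
            * (μ1 i.1 (finProdFinEquiv.symm l).1 * μ2 i.2 (finProdFinEquiv.symm l).2)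
          = ∑ i : I1 × I2,
            (γ.1 i.1 * μ1 i.1 (finProdFinEquiv.symm l).1)
            * (((S2.prepEq s).1 i.2 - (S2.prepEq s).2 i.2) * μ2 i.2 (finProdFinEquiv.symm l).2) :=
            Finset.sum_congr rfl fun i _ => by show ((_*_) - (_*_)) * _ = _ ; ring
        _ = (∑ i1, γ.1 i1 * μ1 i1 (finProdFinEquiv.symm l).1)
            * (∑ i2, ((S2.prepEq s).1 i2 - (S2.prepEq s).2 i2) * μ2 i2 (finProdFinEquiv.symm l).2)
            := sum_prod_factor
              (fun i1 => γ.1 i1 * μ1 i1 (finProdFinEquiv.symm l).1)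
              (fun i2 => ((S2.prepEq s).1 i2 - (S2.prepEq s).2 i2) * μ2 i2 (finProdFinEquiv.symm l).2)
        _ = 0 := by rw [hpe2 s _, mul_zero]
  · rintro (⟨r, γ⟩ | ⟨r, γ⟩) l
    · calc ∑ kj : (K1 × K2) × (J1 × J2),
            (((S1.prod S2).measEq (Sum.inl (r, γ))).1 kj
              - ((S1.prod S2).measEq (Sum.inl (r, γ))).2 kj)
            * (ξ1 (finProdFinEquiv.symm l).1 kj.2.1 kj.1.1
              * ξ2 (finProdFinEquiv.symm l).2 kj.2.2 kj.1.2)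
          = ∑ x : (K1 × J1) × (K2 × J2),
            ((((S1.measEq r).1 x.1 - (S1.measEq r).2 x.1))
              * ξ1 (finProdFinEquiv.symm l).1 x.1.2 x.1.1)
            * (γ.1 x.2 * ξ2 (finProdFinEquiv.symm l).2 x.2.2 x.2.1) := by
            refine Fintype.sum_equiv (Equiv.prodProdProdComm K1 K2 J1 J2) _ _ ?_
            rintro ⟨⟨k1, k2⟩, j1, j2⟩
            simp only [Equiv.prodProdProdComm_apply]
            show ((_*_) - (_*_)) * _ = _
            ring
        _ = (∑ x1 : K1 × J1, ((S1.measEq r).1 x1 - (S1.measEq r).2 x1)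
              * ξ1 (finProdFinEquiv.symm l).1 x1.2 x1.1)
            * (∑ x2 : K2 × J2, γ.1 x2 * ξ2 (finProdFinEquiv.symm l).2 x2.2 x2.1) :=
            sum_prod_factor
              (fun x1 : K1 × J1 => ((S1.measEq r).1 x1 - (S1.measEq r).2 x1) * ξ1 (finProdFinEquiv.symm l).1 x1.2 x1.1)
              (fun x2 : K2 × J2 => γ.1 x2 * ξ2 (finProdFinEquiv.symm l).2 x2.2 x2.1)
        _ = 0 := by rw [hme1 r _, zero_mul]
    · calc ∑ kj : (K1 × K2) × (J1 × J2),
            (((S1.prod S2).measEq (Sum.inr (r, γ))).1 kj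
              - ((S1.prod S2).measEq (Sum.inr (r, γ))).2 kj)
            * (ξ1 (finProdFinEquiv.symm l).1 kj.2.1 kj.1.1
              * ξ2 (finProdFinEquiv.symm l).2 kj.2.2 kj.1.2)
          = ∑ x : (K1 × J1) × (K2 × J2),
            (γ.1 x.1 * ξ1 (finProdFinEquiv.symm l).1 x.1.2 x.1.1)
            * ((((S2.measEq r).1 x.2 - (S2.measEq r).2 x.2))
              * ξ2 (finProdFinEquiv.symm l).2 x.2.2 x.2.1) := by
            refine Fintype.sum_equiv (Equiv.prodProdProdComm K1 K2 J1 J2) _ _ ?_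
            rintro ⟨⟨k1, k2⟩, j1, j2⟩
            simp only [Equiv.prodProdProdComm_apply]
            show ((_*_) - (_*_)) * _ = _
            ring
        _ = (∑ x1 : K1 × J1, γ.1 x1 * ξ1 (finProdFinEquiv.symm l).1 x1.2 x1.1)
            * (∑ x2 : K2 × J2, ((S2.measEq r).1 x2 - (S2.measEq r).2 x2)
              * ξ2 (finProdFinEquiv.symm l).2 x2.2 x2.1) :=
            sum_prod_factor
              (fun x1 : K1 × J1 => γ.1 x1 * ξ1 (finProdFinEquiv.symm l).1 x1.2 x1.1)
              (fun x2 : K2 × J2 => ((S2.measEq r).1 x2 - (S2.measEq r).2 x2) * ξ2 (finProdFinEquiv.symm l).2 x2.2 x2.1)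
        _ = 0 := by rw [hme2 r _, mul_zero]

/-- the relative entropy of contextuality is subadditive under
independent juxtapositions. -/
theorem relEntCtx_subadditive
    {I1 J1 K1 I2 J2 K2 : Type}
    [Fintype I1] [Fintype J1] [Fintype K1] [Fintype I2] [Fintype J2] [Fintype K2]
    [Nonempty I1] [Nonempty J1] [Nonempty K1] [Nonempty I2] [Nonempty J2] [Nonempty K2]
    (S1 : Scenario I1 J1 K1) (S2 : Scenario I2 J2 K2)
    (p1 : I1 → J1 → K1 → ℝ) (p2 : I2 → J2 → K2 → ℝ)
    (hp1 : IsBehavior p1) (hp2 : IsBehavior p2)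
    (h1 : {q : I1 → J1 → K1 → ℝ | Noncontextual S1 q}.Nonempty)
    (h2 : {q : I2 → J2 → K2 → ℝ | Noncontextual S2 q}.Nonempty)
    (h12 : {q : I1 × I2 → J1 × J2 → K1 × K2 → ℝ |
        Noncontextual (S1.prod S2) q}.Nonempty) :
    relEntCtx (S1.prod S2) (prodBehavior p1 p2)
      ≤ relEntCtx S1 p1 + relEntCtx S2 p2 := by
  have hAbot : relEntCtx S1 p1 ≠ ⊥ := relEntCtx_ne_bot S1 hp1
  have hBbot : relEntCtx S2 p2 ≠ ⊥ := relEntCtx_ne_bot S2 hp2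
  by_cases hAt : relEntCtx S1 p1 = ⊤
  · rw [hAt, EReal.top_add_of_ne_bot hBbot]; exact le_top
  by_cases hBt : relEntCtx S2 p2 = ⊤
  · rw [hBt, EReal.add_top_of_ne_bot hAbot]; exact le_top
  set a := (relEntCtx S1 p1).toReal with ha
  set b := (relEntCtx S2 p2).toReal with hb
  have hAe : relEntCtx S1 p1 = (a : EReal) := (EReal.coe_toReal hAt hAbot).symm
  have hBe : relEntCtx S2 p2 = (b : EReal) := (EReal.coe_toReal hBt hBbot).symm
  rw [hAe, hBe, ← EReal.coe_add, ← EReal.le_of_forall_lt_iff_le]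
  intro z hz
  have hzr : a + b < z := EReal.coe_lt_coe_iff.mp hz
  set ε := (z - (a + b)) / 2 with hε
  have hε0 : 0 < ε := by rw [hε]; linarith
  have hxa : relEntCtx S1 p1 < ((a + ε : ℝ) : EReal) := by
    rw [hAe]; exact EReal.coe_lt_coe_iff.mpr (by linarith)
  have hxb : relEntCtx S2 p2 < ((b + ε : ℝ) : EReal) := by
    rw [hBe]; exact EReal.coe_lt_coe_iff.mpr (by linarith)
  unfold relEntCtx at hxa hxb
  obtain ⟨q1, hq1⟩ := iInf_lt_iff.mp hxa
  obtain ⟨q2, hq2⟩ := iInf_lt_iff.mp hxb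
  have hq1mem : q1 ∈ {q : I1 → J1 → K1 → ℝ | Noncontextual S1 q} := by
    by_contra hmem
    rw [iInf_neg hmem] at hq1
    exact not_top_lt hq1
  have hq2mem : q2 ∈ {q : I2 → J2 → K2 → ℝ | Noncontextual S2 q} := by
    by_contra hmem
    rw [iInf_neg hmem] at hq2
    exact not_top_lt hq2
  rw [iInf_pos hq1mem] at hq1
  rw [iInf_pos hq2mem] at hq2
  have hD := DKL_prod_le hp1 hp2 hq1.le hq2.le
  have hle : relEntCtx (S1.prod S2) (prodBehavior p1 p2)
      ≤ DKL (prodBehavior p1 p2) (prodBehavior q1 q2) := by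
    unfold relEntCtx
    exact iInf₂_le (prodBehavior q1 q2) (noncontextual_prod hq1mem hq2mem)
  have hzz : ((a + ε) + (b + ε) : ℝ) = z := by rw [hε]; ring
  exact hle.trans (hD.trans_eq (by rw [hzz]))
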